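/- arXiv:2508.14265 — 2 statements merged into one kernel-verified Lean document; each statement's English description precedes it below -/
import Mathlib

section
/- Let φ : F₂^(m+k) → F₂^(m-k) (with 0 < k < m) satisfy property (P₁*): D_v D_w φ ≠ 0 for all pairs of linearly independent v, w ∈ F₂^(m+k). Let f(x,y) = x·φ(y) + h(y) on F₂^(m-k) × F₂^(m+k). Then every M-subspace V of f satisfies dim V ≤ m - k. -/
open Finset

/-- Dot product on `F₂^k`. -/
def dotp {k : ℕ} (x y : Fin k → ZMod 2) : ZMod 2 := ∑ i, x i * y i

/-- The character `z ↦ (-1)^z`. -/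
def chr (z : ZMod 2) : ℤ := (-1 : ℤ) ^ z.val

/-- Walsh–Hadamard transform of a Boolean function on `F₂^p × F₂^q`. -/
def walshP {p q : ℕ} (f : (Fin p → ZMod 2) × (Fin q → ZMod 2) → ZMod 2)
    (a : Fin p → ZMod 2) (b : Fin q → ZMod 2) : ℤ :=
  ∑ x : Fin p → ZMod 2, ∑ y : Fin q → ZMod 2, chr (f (x, y) + dotp a x + dotp b y)

/-- `S` is a 2-dimensional affine subspace (flat) of `F₂^k`. -/
def Is2Flat {k : ℕ} (S : Set (Fin k → ZMod 2)) : Prop :=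
  ∃ (c : Fin k → ZMod 2) (W : Submodule (ZMod 2) (Fin k → ZMod 2)),
    Module.finrank (ZMod 2) ↥W = 2 ∧ S = (fun w => c + w) '' (W : Set (Fin k → ZMod 2))

/-- `V` is an M-subspace of `f`: all second-order derivatives along `V` vanish. -/
def IsMSub {p q : ℕ} (f : (Fin p → ZMod 2) × (Fin q → ZMod 2) → ZMod 2)
    (V : Submodule (ZMod 2) ((Fin p → ZMod 2) × (Fin q → ZMod 2))) : Prop :=
  ∀ a ∈ V, ∀ b ∈ V, ∀ x, f x + f (x + a) + f (x + b) + f (x + a + b) = 0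

/-- Property `(P₁*)`: every second-order derivative along a pair of linearly
independent directions is not identically zero. -/
def P1star {p q : ℕ} (φ : (Fin p → ZMod 2) → (Fin q → ZMod 2)) : Prop :=
  ∀ v w : Fin p → ZMod 2, LinearIndependent (ZMod 2) ![v, w] →
    ∃ y, φ y + φ (y + v) + φ (y + w) + φ (y + v + w) ≠ 0

lemma dotp_add_left {k : ℕ} (x u v : Fin k → ZMod 2) : dotp (x + u) v = dotp x v + dotp u v := by
  simp [dotp, add_mul, Finset.sum_add_distrib]
lemma dotp_add_right {k : ℕ} (x u v : Fin k → ZMod 2) : dotp x (u + v) = dotp x u + dotp x v := by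
  simp [dotp, mul_add, Finset.sum_add_distrib]
lemma dotp_zero_left {k : ℕ} (v : Fin k → ZMod 2) : dotp 0 v = 0 := by simp [dotp]
lemma dotp_smul_left {k : ℕ} (r : ZMod 2) (x v : Fin k → ZMod 2) :
    dotp (r • x) v = r * dotp x v := by
  simp [dotp, Finset.mul_sum, mul_assoc]
lemma dotp_single {k : ℕ} (i : Fin k) (v : Fin k → ZMod 2) :
    dotp (Pi.single i 1) v = v i := by
  simp [dotp, Pi.single_apply, ite_mul]

lemma keyDD {p q : ℕ} {φ : (Fin q → ZMod 2) → Fin p → ZMod 2}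
    {h : (Fin q → ZMod 2) → ZMod 2}
    {f : (Fin p → ZMod 2) × (Fin q → ZMod 2) → ZMod 2}
    (hf : ∀ x y, f (x, y) = dotp x (φ y) + h y)
    {V : Submodule (ZMod 2) ((Fin p → ZMod 2) × (Fin q → ZMod 2))}
    (hV : IsMSub f V) {a b : (Fin p → ZMod 2) × (Fin q → ZMod 2)}
    (ha : a ∈ V) (hb : b ∈ V) (y : Fin q → ZMod 2) :
    φ y + φ (y + a.2) + φ (y + b.2) + φ (y + a.2 + b.2) = 0 := by
  obtain ⟨a1, a2⟩ := a
  obtain ⟨b1, b2⟩ := b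
  funext i
  have H0 := hV _ ha _ hb (0, y)
  have Hi := hV _ ha _ hb (Pi.single i 1, y)
  simp only [Prod.mk_add_mk, hf, dotp_add_left, dotp_zero_left, dotp_single, zero_add] at H0 Hi
  simp only [Pi.add_apply, Pi.zero_apply]
  linear_combination (norm := (ring_nf; try simp [CharTwo.two_eq_zero])) Hi - H0

lemma keyKer {p q : ℕ} {φ : (Fin q → ZMod 2) → Fin p → ZMod 2}
    {h : (Fin q → ZMod 2) → ZMod 2}
    {f : (Fin p → ZMod 2) × (Fin q → ZMod 2) → ZMod 2}
    (hf : ∀ x y, f (x, y) = dotp x (φ y) + h y)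
    {V : Submodule (ZMod 2) ((Fin p → ZMod 2) × (Fin q → ZMod 2))}
    (hV : IsMSub f V) {a b : (Fin p → ZMod 2) × (Fin q → ZMod 2)}
    (ha : a ∈ V) (hb : b ∈ V) (hb2 : b.2 = 0) (y : Fin q → ZMod 2) :
    dotp b.1 (φ y) + dotp b.1 (φ (y + a.2)) = 0 := by
  obtain ⟨a1, a2⟩ := a
  obtain ⟨b1, b2⟩ := b
  simp only at hb2
  subst hb2
  have H0 := hV _ ha _ hb (0, y)
  simp only [Prod.mk_add_mk, hf, dotp_add_left, dotp_zero_left, dotp_single, zero_add, add_zero] at H0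
  simp only
  linear_combination (norm := (ring_nf; try simp [CharTwo.two_eq_zero])) H0

/-- if `φ : F₂^{m+k} → F₂^{m-k}` satisfies `(P₁*)` then every
M-subspace of `f(x,y) = x·φ(y) + h(y)` has dimension at most `m - k`. -/
theorem MSub_dim_le_of_P1star {m k : ℕ} (hk : 0 < k) (hkm : k < m)
    (φ : (Fin (m + k) → ZMod 2) → (Fin (m - k) → ZMod 2)) (hφ : P1star φ)
    (h : (Fin (m + k) → ZMod 2) → ZMod 2)
    (f : (Fin (m - k) → ZMod 2) × (Fin (m + k) → ZMod 2) → ZMod 2)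
    (hf : ∀ x y, f (x, y) = dotp x (φ y) + h y)
    (V : Submodule (ZMod 2) ((Fin (m - k) → ZMod 2) × (Fin (m + k) → ZMod 2)))
    (hV : IsMSub f V) :
    Module.finrank (ZMod 2) ↥V ≤ m - k := by
  classical
  have hzmod : ∀ c : ZMod 2, c = 0 ∨ c = 1 := by decide
  by_cases hc : ∀ v ∈ V, (v : (Fin (m - k) → ZMod 2) × (Fin (m + k) → ZMod 2)).2 = 0
  · -- V injects into the first factor
    have inj : Function.Injective
        ((LinearMap.fst (ZMod 2) (Fin (m - k) → ZMod 2) (Fin (m + k) → ZMod 2)).comp V.subtype) := by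
      intro u v huv
      have h1 : ((u : ↥V) : (Fin (m - k) → ZMod 2) × (Fin (m + k) → ZMod 2)).1
          = ((v : ↥V) : (Fin (m - k) → ZMod 2) × (Fin (m + k) → ZMod 2)).1 := huv
      have h2 : ((u : ↥V) : (Fin (m - k) → ZMod 2) × (Fin (m + k) → ZMod 2)).2
          = ((v : ↥V) : (Fin (m - k) → ZMod 2) × (Fin (m + k) → ZMod 2)).2 := by
        rw [hc u.1 u.2, hc v.1 v.2]
      exact Subtype.ext (Prod.ext h1 h2)
    calc Module.finrank (ZMod 2) ↥V
        ≤ Module.finrank (ZMod 2) (Fin (m - k) → ZMod 2) :=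
          LinearMap.finrank_le_finrank_of_injective inj
      _ = m - k := Module.finrank_fin_fun _
  · push_neg at hc
    obtain ⟨a, haV, ha2⟩ := hc
    -- Step A: second components are 0 or a.2
    have hdep : ∀ b ∈ V, b.2 = 0 ∨ b.2 = a.2 := by
      intro b hbV
      by_contra hcon
      push_neg at hcon
      have hli : LinearIndependent (ZMod 2) ![a.2, b.2] := by
        rw [linearIndependent_fin2]
        constructor
        · simpa using hcon.1
        · intro cc hcc
          simp only [Matrix.cons_val_one, Matrix.head_cons, Matrix.cons_val_zero] at hcc
          rcases hzmod cc with rfl | rfl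
          · rw [zero_smul] at hcc; exact ha2 hcc.symm
          · rw [one_smul] at hcc; exact hcon.2 hcc
      obtain ⟨y, hy⟩ := hφ a.2 b.2 hli
      exact hy (keyDD hf hV haV hbV y)
    -- Step B: the first derivative along a.2 is not identically zero
    have hexy : ∃ y0, φ y0 + φ (y0 + a.2) ≠ 0 := by
      by_contra hcon
      push_neg at hcon
      have hne : ∃ w, w ∉ Submodule.span (ZMod 2) {a.2} := by
        by_contra hall
        push_neg at hall
        have htop : Submodule.span (ZMod 2) {a.2} = ⊤ := by
          exact Submodule.eq_top_iff'.mpr hall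
        have h1 : Module.finrank (ZMod 2) (Submodule.span (ZMod 2) {a.2}) = 1 :=
          finrank_span_singleton ha2
        rw [htop, finrank_top] at h1
        rw [Module.finrank_fin_fun] at h1
        omega
      obtain ⟨w, hw⟩ := hne
      have hli : LinearIndependent (ZMod 2) ![a.2, w] := by
        rw [linearIndependent_fin2]
        constructor
        · simp only [Matrix.cons_val_one, Matrix.head_cons, Matrix.cons_val_zero]
          intro h0
          exact hw (h0 ▸ Submodule.zero_mem _)
        · intro cc hcc
          simp only [Matrix.cons_val_one, Matrix.head_cons, Matrix.cons_val_zero] at hcc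
          rcases hzmod cc with rfl | rfl
          · rw [zero_smul] at hcc; exact ha2 hcc.symm
          · rw [one_smul] at hcc
            exact hw (hcc ▸ Submodule.mem_span_singleton_self _)
      obtain ⟨y, hy⟩ := hφ a.2 w hli
      apply hy
      have e1 := hcon y
      have e2 := hcon (y + w)
      have erw : y + a.2 + w = y + w + a.2 := by abel
      rw [erw]
      linear_combination (norm := abel) e1 + e2
    obtain ⟨y0, hy0⟩ := hexy
    -- the linear functional x ↦ dotp x (φ y0 + φ (y0 + a.2))
    set c0 : Fin (m - k) → ZMod 2 := φ y0 + φ (y0 + a.2) with hc0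
    let ℓ : (Fin (m - k) → ZMod 2) →ₗ[ZMod 2] ZMod 2 :=
      { toFun := fun x => dotp x c0
        map_add' := fun u v => dotp_add_left u v c0
        map_smul' := fun r x => dotp_smul_left r x c0 }
    -- rank-nullity on p2
    let p2 : ↥V →ₗ[ZMod 2] (Fin (m + k) → ZMod 2) :=
      (LinearMap.snd (ZMod 2) (Fin (m - k) → ZMod 2) (Fin (m + k) → ZMod 2)).comp V.subtype
    have hrn := LinearMap.finrank_range_add_finrank_ker p2
    have hrange : LinearMap.range p2 ≤ Submodule.span (ZMod 2) {a.2} := by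
      rintro _ ⟨v, rfl⟩
      rcases hdep v.1 v.2 with h0 | heq
      · show ((v : ↥V) : (Fin (m - k) → ZMod 2) × (Fin (m + k) → ZMod 2)).2 ∈ _
        rw [h0]; exact Submodule.zero_mem _
      · show ((v : ↥V) : (Fin (m - k) → ZMod 2) × (Fin (m + k) → ZMod 2)).2 ∈ _
        rw [heq]; exact Submodule.mem_span_singleton_self _
    have hr1 : Module.finrank (ZMod 2) (LinearMap.range p2) ≤ 1 := by
      calc Module.finrank (ZMod 2) (LinearMap.range p2)
          ≤ Module.finrank (ZMod 2) (Submodule.span (ZMod 2) {a.2}) :=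
            Submodule.finrank_mono hrange
        _ = 1 := finrank_span_singleton ha2
    -- kernel of p2 injects into kernel of ℓ
    have hkermem : ∀ v : ↥(LinearMap.ker p2),
        (((v : ↥V) : (Fin (m - k) → ZMod 2) × (Fin (m + k) → ZMod 2))).1 ∈ LinearMap.ker ℓ := by
      rintro ⟨⟨v, hvV⟩, hvk⟩
      have hv2 : v.2 = 0 := hvk
      have := keyKer hf hV haV hvV hv2 y0
      simp only [LinearMap.mem_ker]
      show dotp v.1 c0 = 0
      rw [hc0, dotp_add_right]
      exact this
    let g : ↥(LinearMap.ker p2) →ₗ[ZMod 2] ↥(LinearMap.ker ℓ) :=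
      LinearMap.codRestrict (LinearMap.ker ℓ)
        (((LinearMap.fst (ZMod 2) (Fin (m - k) → ZMod 2) (Fin (m + k) → ZMod 2)).comp
          V.subtype).comp (LinearMap.ker p2).subtype) hkermem
    have ginj : Function.Injective g := by
      rintro ⟨⟨u, huV⟩, huk⟩ ⟨⟨v, hvV⟩, hvk⟩ huv
      have h1 : u.1 = v.1 := congrArg Subtype.val huv
      have h2 : u.2 = v.2 := by
        have hu2 : u.2 = 0 := huk
        have hv2 : v.2 = 0 := hvk
        rw [hu2, hv2]
      exact Subtype.ext (Subtype.ext (Prod.ext h1 h2))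
    have hk1 : Module.finrank (ZMod 2) (LinearMap.ker p2)
        ≤ Module.finrank (ZMod 2) (LinearMap.ker ℓ) :=
      LinearMap.finrank_le_finrank_of_injective ginj
    have hl := LinearMap.finrank_range_add_finrank_ker ℓ
    rw [Module.finrank_fin_fun] at hl
    have hlr : 1 ≤ Module.finrank (ZMod 2) (LinearMap.range ℓ) := by
      have hne : LinearMap.range ℓ ≠ ⊥ := by
        intro hbot
        obtain ⟨i, hi⟩ : ∃ i, c0 i ≠ 0 := by
          by_contra hall
          push_neg at hall
          exact hy0 (funext hall)
        have hz : ℓ = 0 := LinearMap.range_eq_bot.mp hbot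
        have : ℓ (Pi.single i 1) = 0 := by rw [hz]; rfl
        have h2 : c0 i = 0 := by
          rw [show ℓ (Pi.single i 1) = dotp (Pi.single i 1) c0 from rfl, dotp_single] at this
          exact this
        exact hi h2
      rcases Nat.eq_zero_or_pos (Module.finrank (ZMod 2) (LinearMap.range ℓ)) with h0 | h1
      · exfalso
        exact hne (Submodule.finrank_eq_zero.mp h0)
      · exact h1
    omega
end

section
/- Fix two Boolean functions q, g : F₂^n → F₂ and let f = q ∥ g ∥ q ∥ (g+1) : F₂^{n+2} → F₂, i.e., f(x, 0,0)=q(x), f(x,0,1)=g(x), f(x,1,0)=q(x), f(x,1,1)=g(x)+1. If q and g are bent functions on F₂^n, then f is a bent function on F₂^{n+2}. -/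
open Finset

/-- Walsh–Hadamard transform of a Boolean function on `F₂^p`. -/
def walsh {p : ℕ} (f : (Fin p → ZMod 2) → ZMod 2) (a : Fin p → ZMod 2) : ℤ :=
  ∑ x : Fin p → ZMod 2, chr (f x + dotp a x)


lemma chr_add' (u v : ZMod 2) : chr (u + v) = chr u * chr v := by revert u v; decide

lemma chr_zero' : chr 0 = 1 := by decide
lemma chr_one' : chr 1 = -1 := by decide

/-- if `q` and `g` are bent on `F₂^{2k}`, then the concatenation
`f = q ‖ g ‖ q ‖ (g+1)` is bent on `F₂^{2k+2}`. -/
theorem concat_qgq_g1_bent {k : ℕ}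
    (q g : (Fin (2 * k) → ZMod 2) → ZMod 2)
    (hq : ∀ w, walsh q w = 2 ^ k ∨ walsh q w = -(2 ^ k))
    (hg : ∀ w, walsh g w = 2 ^ k ∨ walsh g w = -(2 ^ k))
    (f : (Fin (2 * k) → ZMod 2) × (Fin 2 → ZMod 2) → ZMod 2)
    (hc₁ : ∀ x, f (x, ![0, 0]) = q x)
    (hc₂ : ∀ x, f (x, ![0, 1]) = g x)
    (hc₃ : ∀ x, f (x, ![1, 0]) = q x)
    (hc₄ : ∀ x, f (x, ![1, 1]) = g x + 1) :
    ∀ a b, walshP f a b = 2 ^ (k + 1) ∨ walshP f a b = -(2 ^ (k + 1)) := by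
  intro a b
  have key : ∀ x, ∑ y : Fin 2 → ZMod 2, chr (f (x, y) + dotp a x + dotp b y)
      = chr (q x + dotp a x) * (1 + chr (b 0))
        + chr (g x + dotp a x) * (chr (b 1) - chr (b 0 + b 1)) := by
    intro x
    have huniv : (univ : Finset (Fin 2 → ZMod 2)) = {![0,0],![0,1],![1,0],![1,1]} := by decide
    rw [huniv, Finset.sum_insert (by decide), Finset.sum_insert (by decide),
      Finset.sum_insert (by decide), Finset.sum_singleton]
    have hdp : ∀ y : Fin 2 → ZMod 2, dotp b y = b 0 * y 0 + b 1 * y 1 := by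
      intro y; simp [dotp, Fin.sum_univ_two]
    rw [hc₁ x, hc₂ x, hc₃ x, hc₄ x, hdp, hdp, hdp, hdp]
    simp only [Matrix.cons_val_zero, Matrix.cons_val_one, Matrix.head_cons, mul_zero, mul_one,
      add_zero, zero_add]
    simp only [chr_add', chr_one']
    ring
  have hsum : walshP f a b
      = walsh q a * (1 + chr (b 0)) + walsh g a * (chr (b 1) - chr (b 0 + b 1)) := by
    unfold walshP walsh
    rw [Finset.sum_congr rfl fun x _ => key x, Finset.sum_add_distrib,
      ← Finset.sum_mul, ← Finset.sum_mul]
  have hz : ∀ z : ZMod 2, z = 0 ∨ z = 1 := by decide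
  have hpow : (2 : ℤ) ^ (k + 1) = 2 * 2 ^ k := by ring
  rcases hz (b 0) with h0 | h0 <;> rcases hz (b 1) with h1 | h1 <;>
    rw [hsum, h0, h1] <;> simp only [chr_zero', chr_one', add_zero, zero_add, chr_add'] <;>
    [rcases hq a with h | h; rcases hq a with h | h; rcases hg a with h | h; rcases hg a with h | h] <;>
    rw [h, hpow] <;> [left; right; left; right; left; right; right; left] <;> ring
end
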